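/- For every 122-avoiding revised ascent sequence x of length n ≥ 2 with max(x) = m, there exist an integer i ≥ 1, a strictly decreasing sequence m = a_1 > a_2 > ⋯ > a_i = 1, and nonnegative integers b_1,...,b_i such that x equals the concatenation a_1^{b_1+1} [a_2↗a_1] a_2^{b_2} [a_3↗a_2] a_3^{b_3} ⋯ a_{i-1}^{b_{i-1}} [a_i↗a_{i-1}] a_i^{b_i}, where a^b denotes b copies of a and [p↗q] denotes the increasing run p, p+1, ..., q. -/

import Mathlib

/-- An endofunction of size `n`: values in `{1,…,n}` (indices are `Fin n`, 0-based). -/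
def IsEndo (n : ℕ) (x : Fin n → ℕ) : Prop := ∀ i, 1 ≤ x i ∧ x i ≤ n

/-- The maximum value of `x`. -/
def maxVal (n : ℕ) (x : Fin n → ℕ) : ℕ := Finset.univ.sup x

/-- A Cayley permutation: an endofunction whose image is `{1,…,max x}`. -/
def IsCayley (n : ℕ) (x : Fin n → ℕ) : Prop :=
  IsEndo n x ∧ ∀ v, 1 ≤ v → v ≤ maxVal n x → ∃ i, x i = v

/-- Ascent bottoms (0-based; index 0 always included). -/
def Ascbot (n : ℕ) (x : Fin n → ℕ) : Set (Fin n) :=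
  {i | i.1 = 0 ∨ ∃ h : i.1 + 1 < n, x i < x ⟨i.1 + 1, h⟩}

/-- Indices of leftmost occurrences of values. -/
def Nub (n : ℕ) (x : Fin n → ℕ) : Set (Fin n) :=
  {i | ∀ j, j < i → x j ≠ x i}

/-- A revised ascent sequence. -/
def IsRAS (n : ℕ) (x : Fin n → ℕ) : Prop :=
  IsCayley n x ∧ Ascbot n x = Nub n x

/-- `x` avoids the pattern `122`. -/
def Avoids122 (n : ℕ) (x : Fin n → ℕ) : Prop :=
  ¬ ∃ i j k : Fin n, i < j ∧ j < k ∧ x i < x j ∧ x j = x k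

/-- The increasing run `p, p+1, …, q` as a list. -/
def run (p q : ℕ) : List ℕ := (List.range (q - p + 1)).map (fun t => p + t)

namespace Stmt10Aux

/-- `w` is blocked before position `k`: it occurred after a strictly smaller value. -/
def Blk (X : ℕ → ℕ) (w k : ℕ) : Prop := ∃ i j, i < j ∧ j < k ∧ X i < X j ∧ X j = w

/-- Shape of the tail of a 122-avoiding revised ascent sequence after the initial plateau. -/
inductive Shape : ℕ → List ℕ → Prop
  | one : Shape 1 []
  | step {c a b : ℕ} {l : List ℕ} (h : a < c) (hs : Shape a l) :
      Shape c (run a c ++ (List.replicate b a ++ l))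

lemma run_single (a : ℕ) : run a a = [a] := by simp [run, List.range_succ]

lemma run_cons {a c : ℕ} (h : a < c) : run a c = a :: run (a + 1) c := by
  unfold run
  have h1 : c - a + 1 = (c - (a + 1) + 1) + 1 := by omega
  rw [h1, List.range_succ_eq_map, List.map_cons, List.map_map]
  simp only [Nat.add_zero]
  congr 1
  apply List.map_congr_left
  intro t _
  simp only [Function.comp_apply]
  omega

lemma dropD (n : ℕ) (X : ℕ → ℕ) (s : ℕ) (hs : s < n) :
    ((List.range n).map X).drop s = X s :: ((List.range n).map X).drop (s + 1) := by
  rw [List.drop_eq_getElem_cons (by simpa using hs)]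
  congr 1
  simp

lemma runlist (n : ℕ) (X : ℕ → ℕ) :
    ∀ g s a c, c - a = g → a ≤ c → s + g < n → (∀ t, t ≤ g → X (s + t) = a + t) →
    ((List.range n).map X).drop s = run a c ++ ((List.range n).map X).drop (s + g + 1) := by
  intro g
  induction g with
  | zero =>
    intro s a c h1 h2 h3 h4
    have hac : a = c := by omega
    subst hac
    rw [run_single, dropD n X s (by omega)]
    have h0 := h4 0 (by omega)
    simp only [Nat.add_zero] at h0
    simp [h0]
  | succ g IH =>
    intro s a c h1 h2 h3 h4
    have hac : a < c := by omega
    rw [run_cons hac, dropD n X s (by omega)]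
    have h0 := h4 0 (by omega)
    simp only [Nat.add_zero] at h0
    have hIH := IH (s + 1) (a + 1) c (by omega) (by omega) (by omega)
      (fun t ht => by
        rw [show s + 1 + t = s + (t + 1) from by omega, h4 (t + 1) (by omega)]
        omega)
    rw [List.cons_append, hIH, h0, show s + 1 + g + 1 = s + (g + 1) + 1 from by omega]

lemma platlist (n : ℕ) (X : ℕ → ℕ) :
    ∀ b s a, s + b ≤ n → (∀ t, t < b → X (s + t) = a) →
    ((List.range n).map X).drop s = List.replicate b a ++ ((List.range n).map X).drop (s + b) := by
  intro b
  induction b with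
  | zero => intro s a _ _; simp
  | succ b IH =>
    intro s a h1 h2
    rw [dropD n X s (by omega)]
    have h0 := h2 0 (by omega)
    simp only [Nat.add_zero] at h0
    rw [IH (s + 1) a (by omega)
      (fun t ht => by
        rw [show s + 1 + t = s + (t + 1) from by omega]
        exact h2 (t + 1) (by omega))]
    rw [h0, List.replicate_succ, List.cons_append,
      show s + 1 + b = s + (b + 1) from by omega]

lemma climb (n m : ℕ) (X : ℕ → ℕ)
    (H1 : ∀ j, j < n → 1 ≤ X j ∧ X j ≤ m)
    (H2 : ∀ v, 1 ≤ v → v ≤ m → ∃ j, j < n ∧ X j = v)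
    (H3 : ∀ i, 0 < i → i < n → (∀ j, j < i → X j ≠ X i) → i + 1 < n ∧ X i < X (i + 1))
    (H5 : ∀ i j k, i < j → j < k → k < n → X i < X j → X j = X k → False) :
    ∀ g p u C, C - u ≤ g → 1 ≤ p → p < n → X p = u → u < C → C ≤ m →
      (∀ j, j < p → X j ≠ u) →
      (∀ w, u < w → w < C → ∀ j, j < p → X j ≠ w) →
      (∀ w, C < w → w ≤ m → Blk X w p) →
      p + (C - u) < n ∧ ∀ t, t ≤ C - u → X (p + t) = u + t := by
  classical
  intro g
  induction g with
  | zero => intro p u C hg _ _ _ huC _ _ _ _; omega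
  | succ g IH =>
    intro p u C hg hp1 hpn hXp huC hCm hnew hW hB
    obtain ⟨hp1n, hasc⟩ := H3 p (by omega) hpn (by rw [hXp]; exact hnew)
    have huv : u < X (p + 1) := by omega
    have hvm : X (p + 1) ≤ m := (H1 _ hp1n).2
    by_cases hv1 : X (p + 1) = u + 1
    · by_cases hC1 : u + 1 = C
      · refine ⟨by omega, ?_⟩
        intro t ht
        have hCu : C - u = 1 := by omega
        rw [hCu] at ht
        interval_cases t
        · simpa using hXp
        · simpa using by omega
      · have h2 : u + 1 < C := by omega
        have hnew' : ∀ j, j < p + 1 → X j ≠ u + 1 := by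
          intro j hj
          rcases (by omega : j < p ∨ j = p) with h | h
          · exact hW (u + 1) (by omega) h2 j h
          · subst h; omega
        have hW' : ∀ w, u + 1 < w → w < C → ∀ j, j < p + 1 → X j ≠ w := by
          intro w hw1 hw2 j hj
          rcases (by omega : j < p ∨ j = p) with h | h
          · exact hW w (by omega) hw2 j h
          · subst h; omega
        have hB' : ∀ w, C < w → w ≤ m → Blk X w (p + 1) := by
          intro w hw1 hw2
          obtain ⟨i, j, hij, hjp, hlt, heq⟩ := hB w hw1 hw2
          exact ⟨i, j, hij, by omega, hlt, heq⟩
        obtain ⟨hn1, hvals⟩ := IH (p + 1) (u + 1) C (by omega) (by omega) hp1n hv1 h2 hCm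
          hnew' hW' hB'
        refine ⟨by omega, ?_⟩
        intro t ht
        match t with
        | 0 => simpa using hXp
        | Nat.succ t' =>
          have hv := hvals t' (by omega)
          rw [show p + (t' + 1) = p + 1 + t' from by omega, hv]
          omega
    · exfalso
      rcases Nat.lt_or_ge C (X (p + 1)) with hvC | hvC
      · obtain ⟨i, j, hij, hjp, hlt, heq⟩ := hB (X (p + 1)) (by omega) hvm
        exact H5 i j (p + 1) hij (by omega) hp1n hlt heq
      · -- u + 2 ≤ X (p+1) ≤ C
        set v := X (p + 1) with hvdef
        have huv2 : u + 2 ≤ v := by omega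
        have hmain : (p + 1) + (C - v) < n ∧ ∀ t, t ≤ C - v → X (p + 1 + t) = v + t := by
          by_cases hvC' : v = C
          · refine ⟨by omega, ?_⟩
            intro t ht
            have ht0 : t = 0 := by omega
            subst ht0
            simpa using hvdef.symm
          · have hvC2 : v < C := by omega
            exact IH (p + 1) v C (by omega) (by omega) hp1n rfl hvC2 hCm
              (fun j hj => by
                rcases (by omega : j < p ∨ j = p) with h | h
                · exact hW v (by omega) hvC2 j h
                · subst h; omega)
              (fun w hw1 hw2 j hj => by
                rcases (by omega : j < p ∨ j = p) with h | h
                · exact hW w (by omega) hw2 j h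
                · subst h; omega)
              (fun w hw1 hw2 => by
                obtain ⟨i, j, hij, hjp, hlt, heq⟩ := hB w hw1 hw2
                exact ⟨i, j, hij, by omega, hlt, heq⟩)
        obtain ⟨hP1n, hcl⟩ := hmain
        obtain ⟨j0, hj0n, hj0⟩ := H2 (u + 1) (by omega) (by omega)
        have hj0P1 : p + 1 + (C - v) < j0 := by
          by_contra hcon
          push_neg at hcon
          rcases Nat.lt_or_ge j0 p with h | h
          · exact hW (u + 1) (by omega) (by omega) j0 h hj0
          rcases Nat.eq_or_lt_of_le h with h' | h'
          · subst h'; omega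
          · have hx := hcl (j0 - (p + 1)) (by omega)
            rw [show p + 1 + (j0 - (p + 1)) = j0 from by omega] at hx
            omega
        have hexq : ∃ q, p + 1 + (C - v) < q ∧ q < n ∧ u < X q ∧ X q < v :=
          ⟨j0, hj0P1, hj0n, by omega, by omega⟩
        have hspec := Nat.find_spec hexq
        have hmin := fun r (hr : r < Nat.find hexq) => Nat.find_min hexq hr
        set q := Nat.find hexq with hqd
        obtain ⟨hqP1, hqn, hqu, hqv⟩ := hspec
        have hunseen : ∀ w', u < w' → w' < v → ∀ j, j < q → X j ≠ w' := by
          intro w' h1 h2 j hj hXj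
          rcases Nat.lt_or_ge j p with h | h
          · exact hW w' h1 (by omega) j h hXj
          rcases Nat.eq_or_lt_of_le h with h' | h'
          · subst h'; omega
          rcases Nat.lt_or_ge (p + 1 + (C - v)) j with h'' | h''
          · exact hmin j hj ⟨h'', by omega, by omega, by omega⟩
          · have hx := hcl (j - (p + 1)) (by omega)
            rw [show p + 1 + (j - (p + 1)) = j from by omega] at hx
            omega
        have hclq := IH q (X q) v (by omega) (by omega) hqn rfl hqv (by omega)
          (fun j hj => hunseen (X q) hqu hqv j hj)
          (fun w hw1 hw2 j hj => hunseen w (by omega) hw2 j hj)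
          (by
            intro w hw1 hw2
            rcases le_or_gt w C with h3 | h3
            · refine ⟨p, p + 1 + (w - v), by omega, by omega, ?_, ?_⟩
              · rw [hXp, hcl (w - v) (by omega)]; omega
              · rw [hcl (w - v) (by omega)]; omega
            · obtain ⟨i, j, hij, hjp, hlt, heq⟩ := hB w h3 hw2
              exact ⟨i, j, hij, by omega, hlt, heq⟩)
        obtain ⟨hkn, hkvals⟩ := hclq
        have hXk : X (q + (v - X q)) = v := by
          rw [hkvals (v - X q) le_rfl]; omega
        exact H5 p (p + 1) (q + (v - X q)) (by omega) (by omega) hkn (by omega) (by omega)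

lemma seg (n m : ℕ) (X : ℕ → ℕ)
    (H1 : ∀ j, j < n → 1 ≤ X j ∧ X j ≤ m)
    (H2 : ∀ v, 1 ≤ v → v ≤ m → ∃ j, j < n ∧ X j = v)
    (H3 : ∀ i, 0 < i → i < n → (∀ j, j < i → X j ≠ X i) → i + 1 < n ∧ X i < X (i + 1))
    (H5 : ∀ i j k, i < j → j < k → k < n → X i < X j → X j = X k → False)
    (hm1 : 1 ≤ m) :
    ∀ d s c, n - s ≤ d → 1 ≤ s → s ≤ n → 1 ≤ c → c ≤ m →
      (∀ v, (∃ j, j < s ∧ X j = v) ↔ (c ≤ v ∧ v ≤ m)) →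
      (∀ w, c < w → w ≤ m → Blk X w s) →
      (s < n → X s ≠ c) →
      Shape c (((List.range n).map X).drop s) := by
  classical
  intro d
  induction d with
  | zero =>
    intro s c hd hs1 hsn hc1 hcm Hseen Hblk Hne
    have hs : s = n := by omega
    subst hs
    obtain ⟨j, hjn, hj1⟩ := H2 1 le_rfl hm1
    have hc : c = 1 := by have := (Hseen 1).mp ⟨j, hjn, hj1⟩; omega
    subst hc
    rw [List.drop_eq_nil_of_le (by simp)]
    exact Shape.one
  | succ d IH =>
    intro s c hd hs1 hsn hc1 hcm Hseen Hblk Hne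
    by_cases hs : s = n
    · subst hs
      obtain ⟨j, hjn, hj1⟩ := H2 1 le_rfl hm1
      have hc : c = 1 := by have := (Hseen 1).mp ⟨j, hjn, hj1⟩; omega
      subst hc
      rw [List.drop_eq_nil_of_le (by simp)]
      exact Shape.one
    · have hsn' : s < n := by omega
      have haU := H1 s hsn'
      have hac : X s < c := by
        rcases Nat.lt_or_ge (X s) c with h | h
        · exact h
        exfalso
        rcases Nat.eq_or_lt_of_le h with h' | h'
        · exact Hne hsn' h'.symm
        · obtain ⟨i, j, hij, hjs, hlt, heq⟩ := Hblk (X s) h' haU.2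
          exact H5 i j s hij hjs hsn' hlt heq
      have hnew_s : ∀ j, j < s → X j ≠ X s := by
        intro j hj hXj
        have := (Hseen (X s)).mp ⟨j, hj, hXj⟩
        omega
      obtain ⟨hPn, hvals⟩ := climb n m X H1 H2 H3 H5 (c - X s) s (X s) c le_rfl hs1 hsn'
        rfl hac hcm hnew_s
        (fun w h1 h2 j hj hXj => by have := (Hseen w).mp ⟨j, hj, hXj⟩; omega)
        Hblk
      have hexs' : ∃ r, s + (c - X s) < r ∧ (r < n → X r ≠ X s) :=
        ⟨n, by omega, fun h => absurd h (lt_irrefl n)⟩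
      have hspec := Nat.find_spec hexs'
      have hmin := fun r (hr : r < Nat.find hexs') => Nat.find_min hexs' hr
      have hs'n : Nat.find hexs' ≤ n :=
        Nat.find_min' hexs' ⟨by omega, fun h => absurd h (lt_irrefl n)⟩
      set s' := Nat.find hexs' with hs'd
      obtain ⟨hs'P, hs'a⟩ := hspec
      have hplat : ∀ r, s + (c - X s) < r → r < s' → X r = X s := by
        intro r h1 h2
        by_contra hne
        exact hmin r h2 ⟨h1, fun _ => hne⟩
      have Hseen' : ∀ v, (∃ j, j < s' ∧ X j = v) ↔ (X s ≤ v ∧ v ≤ m) := by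
        intro v
        constructor
        · rintro ⟨j, hj, hXj⟩
          rcases Nat.lt_or_ge j s with h | h
          · have := (Hseen v).mp ⟨j, h, hXj⟩; omega
          rcases le_or_gt j (s + (c - X s)) with h2 | h2
          · have hx := hvals (j - s) (by omega)
            rw [show s + (j - s) = j from by omega] at hx
            omega
          · have hx := hplat j h2 (by omega)
            omega
        · rintro ⟨h1, h2⟩
          rcases le_or_gt c v with h3 | h3
          · obtain ⟨j, hj, hXj⟩ := (Hseen v).mpr ⟨h3, h2⟩
            exact ⟨j, by omega, hXj⟩
          · refine ⟨s + (v - X s), by omega, ?_⟩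
            rw [hvals (v - X s) (by omega)]; omega
      have Hblk' : ∀ w, X s < w → w ≤ m → Blk X w s' := by
        intro w h1 h2
        rcases le_or_gt w c with h3 | h3
        · refine ⟨s, s + (w - X s), by omega, by omega, ?_, ?_⟩
          · rw [hvals (w - X s) (by omega)]; omega
          · rw [hvals (w - X s) (by omega)]; omega
        · obtain ⟨i, j, hij, hjs, hlt, heq⟩ := Hblk w h3 h2
          exact ⟨i, j, hij, by omega, hlt, heq⟩
      have hrec := IH s' (X s) (by omega) (by omega) hs'n haU.1 haU.2 Hseen' Hblk' hs'a
      have hD1 := runlist n X (c - X s) s (X s) c rfl (by omega) hPn hvals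
      have hD2 := platlist n X (s' - (s + (c - X s)) - 1) (s + (c - X s) + 1) (X s)
        (by omega)
        (fun t ht => hplat (s + (c - X s) + 1 + t) (by omega) (by omega))
      rw [hD1, hD2,
        show s + (c - X s) + 1 + (s' - (s + (c - X s)) - 1) = s' from by omega]
      exact Shape.step hac hrec

lemma flatten_range_succ {α : Type*} (f : ℕ → List α) (k : ℕ) :
    List.flatten ((List.range (k + 1)).map f) =
      f 0 ++ List.flatten ((List.range k).map (fun j => f (j + 1))) := by
  rw [List.range_succ_eq_map, List.map_cons, List.flatten_cons, List.map_map]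
  rfl

lemma shape_decomp : ∀ {c : ℕ} {l : List ℕ}, Shape c l →
    ∃ i, 1 ≤ i ∧ ∃ A B : ℕ → ℕ, A 0 = c ∧ A (i - 1) = 1 ∧
      (∀ j, j + 1 < i → A (j + 1) < A j) ∧
      l = List.flatten ((List.range (i - 1)).map
        (fun j => run (A (j + 1)) (A j) ++ List.replicate (B (j + 1)) (A (j + 1)))) := by
  intro c l h
  induction h with
  | one =>
    exact ⟨1, le_rfl, fun _ => 1, fun _ => 0, rfl, rfl, by intro j hj; omega, by simp⟩
  | @step c a b l hac hs IH =>
    obtain ⟨i', hi1, A', B', hA0', hAl', hdec', hl'⟩ := IH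
    refine ⟨i' + 1, by omega, fun j => Nat.casesOn j c A',
      fun j => Nat.casesOn j 0 (fun j' => Nat.casesOn j' b (fun j'' => B' (j'' + 1))),
      rfl, ?_, ?_, ?_⟩
    · rw [show i' + 1 - 1 = (i' - 1) + 1 from by omega]
      exact hAl'
    · intro j hj
      cases j with
      | zero =>
        show A' 0 < c
        rw [hA0']
        exact hac
      | succ j' =>
        show A' (j' + 1) < A' j'
        exact hdec' j' (by omega)
    · rw [show i' + 1 - 1 = (i' - 1) + 1 from by omega, flatten_range_succ, hl']
      rw [← List.append_assoc]
      congr 1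
      · show run a c ++ List.replicate b a = run (A' 0) c ++ List.replicate b (A' 0)
        rw [hA0']

end Stmt10Aux

theorem stmt10 (n : ℕ) (hn : 2 ≤ n) (x : Fin n → ℕ)
    (hx : IsRAS n x) (hav : Avoids122 n x) :
    ∃ i : ℕ, 1 ≤ i ∧ ∃ a b : ℕ → ℕ,
      a 0 = maxVal n x ∧ a (i - 1) = 1 ∧
      (∀ j, j + 1 < i → a (j + 1) < a j) ∧
      List.ofFn x =
        List.replicate (b 0 + 1) (a 0) ++
          (List.flatten ((List.range (i - 1)).map
            (fun j => run (a (j + 1)) (a j) ++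
              List.replicate (b (j + 1)) (a (j + 1))))) := by
  classical
  open Stmt10Aux in
  obtain ⟨⟨hEndo, hCay⟩, hNA⟩ := hx
  set m := maxVal n x with hm
  have hn0 : 0 < n := by omega
  obtain ⟨X, hXdef⟩ : ∃ X : ℕ → ℕ, ∀ i (h : i < n), X i = x ⟨i, h⟩ :=
    ⟨fun i => if h : i < n then x ⟨i, h⟩ else 0, fun i h => dif_pos h⟩
  have hle : ∀ i : Fin n, x i ≤ m := fun i => Finset.le_sup (Finset.mem_univ i)
  have H1 : ∀ j, j < n → 1 ≤ X j ∧ X j ≤ m := by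
    intro j hj
    rw [hXdef j hj]
    exact ⟨(hEndo ⟨j, hj⟩).1, hle _⟩
  have H2 : ∀ v, 1 ≤ v → v ≤ m → ∃ j, j < n ∧ X j = v := by
    intro v h1 h2
    obtain ⟨i, hi⟩ := hCay v h1 h2
    exact ⟨i.1, i.2, by rw [hXdef i.1 i.2]; exact hi⟩
  have H3 : ∀ i, 0 < i → i < n → (∀ j, j < i → X j ≠ X i) → i + 1 < n ∧ X i < X (i + 1) := by
    intro i h0 hin hnew
    have hiN : (⟨i, hin⟩ : Fin n) ∈ Nub n x := by
      intro j hj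
      have := hnew j.1 hj
      rw [hXdef j.1 j.2, hXdef i hin] at this
      exact this
    have hiA : (⟨i, hin⟩ : Fin n) ∈ Ascbot n x := by rw [hNA]; exact hiN
    simp only [Ascbot, Set.mem_setOf_eq] at hiA
    rcases hiA with h | ⟨h, hlt⟩
    · exact absurd (show i = 0 from h) (by omega)
    · refine ⟨h, ?_⟩
      rw [hXdef i hin, hXdef (i + 1) h]
      exact hlt
  have H5 : ∀ i j k, i < j → j < k → k < n → X i < X j → X j = X k → False := by
    intro i j k h1 h2 h3 h4 h5
    have hin : i < n := by omega
    have hjn : j < n := by omega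
    rw [hXdef i hin, hXdef j hjn] at h4
    rw [hXdef j hjn, hXdef k h3] at h5
    exact hav ⟨⟨i, by omega⟩, ⟨j, by omega⟩, ⟨k, h3⟩, h1, h2, h4, h5⟩
  have hm1 : 1 ≤ m := le_trans (H1 0 hn0).1 (H1 0 hn0).2
  -- x 0 = m
  have hfm : ∃ j, j < n ∧ X j = m := H2 m hm1 le_rfl
  have hX0 : X 0 = m := by
    by_contra h0
    have hspec := Nat.find_spec hfm
    have hj00 : 0 < Nat.find hfm := by
      rcases Nat.eq_zero_or_pos (Nat.find hfm) with h | h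
      · rw [h] at hspec; exact absurd hspec.2 h0
      · exact h
    have hnewm : ∀ j, j < Nat.find hfm → X j ≠ X (Nat.find hfm) := by
      intro j hj hc
      rw [hspec.2] at hc
      exact Nat.find_min hfm hj ⟨by omega, hc⟩
    obtain ⟨h1, h2⟩ := H3 (Nat.find hfm) hj00 hspec.1 hnewm
    have := (H1 (Nat.find hfm + 1) h1).2
    omega
  -- initial plateau of m
  have hex0 : ∃ s, 1 ≤ s ∧ (s < n → X s ≠ m) :=
    ⟨n, by omega, fun h => absurd h (lt_irrefl n)⟩
  have hspec0 := Nat.find_spec hex0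
  have hmin0 := fun r (hr : r < Nat.find hex0) => Nat.find_min hex0 hr
  have hs0n : Nat.find hex0 ≤ n :=
    Nat.find_min' hex0 ⟨by omega, fun h => absurd h (lt_irrefl n)⟩
  set s0 := Nat.find hex0 with hs0d
  obtain ⟨hs01, hs0ne⟩ := hspec0
  have hplat0 : ∀ j, j < s0 → X j = m := by
    intro j hj
    rcases Nat.eq_zero_or_pos j with h | h
    · subst h; exact hX0
    · have h2 : ¬(j < n → X j ≠ m) := fun hc => hmin0 j hj ⟨h, hc⟩
      push_neg at h2
      exact h2.2
  have hShape := seg n m X H1 H2 H3 H5 hm1 n s0 m (by omega) hs01 hs0n hm1 le_rfl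
    (by
      intro v
      constructor
      · rintro ⟨j, hj, hXj⟩
        have := hplat0 j hj
        omega
      · rintro ⟨h1, h2⟩
        exact ⟨0, by omega, by omega⟩)
    (fun w h1 h2 => absurd h2 (by omega))
    hs0ne
  obtain ⟨i, hi1, A, B, hA0, hAl, hdec, hflat⟩ := shape_decomp hShape
  refine ⟨i, hi1, A, (fun j => if j = 0 then s0 - 1 else B j), hA0, hAl, hdec, ?_⟩
  have hofn : List.ofFn x = (List.range n).map X := by
    apply List.ext_getElem (by simp)
    intro k h1 h2
    simp only [List.getElem_ofFn, List.getElem_map, List.getElem_range]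
    exact (hXdef k (by simpa using h1)).symm
  have hrep : (List.range n).map X =
      List.replicate s0 m ++ ((List.range n).map X).drop s0 := by
    have := platlist n X s0 0 m (by omega) (fun t ht => by simpa using hplat0 t ht)
    simpa using this
  rw [hofn, hrep, hflat]
  congr 1
  rw [show (fun j => if j = 0 then s0 - 1 else B j) 0 = s0 - 1 from rfl, hA0]
  congr 1
  omega
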